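/- A set A computes a fixed point free function (a total f ≤_T A with W_{f(n)} ≠ W_n for all n) if and only if A computes a diagonally noncomputable function (a total g ≤_T A with g(e) ≠ φ_e(e) whenever φ_e(e) converges). -/

import Mathlib

open Nat.Partrec (Code)

/-- The `e`-th partial computable function, via the standard numbering of codes. -/
def phi (e : ℕ) : ℕ →. ℕ := (Denumerable.ofNat Code e).eval

/-- `W e` is the domain of the `e`-th partial computable function. -/
def W (e : ℕ) : Set ℕ := {n | (phi e n).Dom}

/-- The halting set ∅'. -/
def K0 : Set ℕ := {e | (phi e e).Dom}

/-- Characteristic function of a set of naturals. -/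
noncomputable def chi (A : Set ℕ) : ℕ → ℕ := A.indicator 1

/-- Partial recursiveness relative to an oracle `O : ℕ → ℕ`. -/
inductive RecursiveIn' (O : ℕ → ℕ) : (ℕ →. ℕ) → Prop
  | zero : RecursiveIn' O (pure 0)
  | succ : RecursiveIn' O Nat.succ
  | left : RecursiveIn' O fun n => (Nat.unpair n).1
  | right : RecursiveIn' O fun n => (Nat.unpair n).2
  | oracle : RecursiveIn' O fun n => Part.some (O n)
  | pair {f g} : RecursiveIn' O f → RecursiveIn' O g →
      RecursiveIn' O fun n => Nat.pair <$> f n <*> g n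
  | comp {f g} : RecursiveIn' O f → RecursiveIn' O g →
      RecursiveIn' O fun n => g n >>= f
  | prec {f g} : RecursiveIn' O f → RecursiveIn' O g →
      RecursiveIn' O (Nat.unpaired fun a n =>
        n.rec (f a) fun y IH => do
          let i ← IH
          g (Nat.pair a (Nat.pair y i)))
  | rfind {f} : RecursiveIn' O f →
      RecursiveIn' O fun a =>
        Nat.rfind fun n => (fun m => m = 0) <$> f (Nat.pair a n)

/-- A total function `f` is Turing reducible to the set `A`. -/
def FuncRecIn (A : Set ℕ) (f : ℕ → ℕ) : Prop :=
  RecursiveIn' (chi A) fun n => Part.some (f n)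

/-- A binary total function `h` is Turing reducible to the set `A`. -/
def Func2RecIn (A : Set ℕ) (h : ℕ → ℕ → ℕ) : Prop :=
  RecursiveIn' (chi A) fun n => Part.some (h (Nat.unpair n).1 (Nat.unpair n).2)

/-- Turing reducibility between sets of naturals. -/
def SetRecIn (A B : Set ℕ) : Prop := RecursiveIn' (chi B) fun n => Part.some (chi A n)

/-- `A` is computably enumerable. -/
def CE (A : Set ℕ) : Prop := REPred (· ∈ A)

/-- Codes for oracle machines. -/
inductive OCode : Type
  | zero | succ | left | right | oracle
  | pair (cf cg : OCode)
  | comp (cf cg : OCode)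
  | prec (cf cg : OCode)
  | rfind' (cf : OCode)

/-- Evaluation of oracle codes relative to an oracle `O`. -/
def OCode.evalo (O : ℕ → ℕ) : OCode → ℕ →. ℕ
  | .zero => pure 0
  | .succ => Nat.succ
  | .left => fun n => Part.some (Nat.unpair n).1
  | .right => fun n => Part.some (Nat.unpair n).2
  | .oracle => fun n => Part.some (O n)
  | .pair cf cg => fun n => Nat.pair <$> evalo O cf n <*> evalo O cg n
  | .comp cf cg => fun n => evalo O cg n >>= evalo O cf
  | .prec cf cg => Nat.unpaired fun a n =>
      n.rec (evalo O cf a) fun y IH => do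
        let i ← IH
        evalo O cg (Nat.pair a (Nat.pair y i))
  | .rfind' cf => Nat.unpaired fun a m =>
      (Nat.rfind fun n => (fun x => x = 0) <$> evalo O cf (Nat.pair a (n + m))).map (· + m)

/-- A standard numbering of oracle codes. -/
def OCode.ofNat : ℕ → OCode
  | 0 => .zero
  | 1 => .succ
  | 2 => .left
  | 3 => .right
  | 4 => .oracle
  | n + 5 =>
    let m := n.div2.div2
    have hm : m < n + 5 := by
      simp only [m, Nat.div2_val]
      exact lt_of_le_of_lt (le_trans (Nat.div_le_self _ _) (Nat.div_le_self _ _))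
        (by omega)
    have _m1 : m.unpair.1 < n + 5 := lt_of_le_of_lt m.unpair_left_le hm
    have _m2 : m.unpair.2 < n + 5 := lt_of_le_of_lt m.unpair_right_le hm
    match n.bodd, n.div2.bodd with
    | false, false => .pair (ofNat m.unpair.1) (ofNat m.unpair.2)
    | false, true  => .comp (ofNat m.unpair.1) (ofNat m.unpair.2)
    | true , false => .prec (ofNat m.unpair.1) (ofNat m.unpair.2)
    | true , true  => .rfind' (ofNat m)
decreasing_by
  all_goals
    have h1 := Nat.unpair_left_le n.div2.div2
    have h2 := Nat.unpair_right_le n.div2.div2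
    simp only [Nat.div2_val] at *
    omega

/-- The Turing jump of an oracle `O : ℕ → ℕ`. -/
def jump (O : ℕ → ℕ) : Set ℕ := {e | (OCode.evalo O (OCode.ofNat e) e).Dom}

/-- A binary partial function `δ` is FPF⁺. -/
def FPFplus (δ : ℕ → ℕ →. ℕ) : Prop :=
  ∀ g : ℕ → ℕ, Computable g → ∃ n, ∀ a ∈ δ n (g n), phi (g n) ≠ phi a


section FpfDncAux

open Nat.Partrec.Code

lemma recursiveIn_of_partrec (O : ℕ → ℕ) {f : ℕ →. ℕ} (h : Nat.Partrec f) :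
    RecursiveIn' O f := by
  induction h with
  | zero => exact .zero
  | succ => exact .succ
  | left => exact .left
  | right => exact .right
  | pair _ _ ih1 ih2 => exact .pair ih1 ih2
  | comp _ _ ih1 ih2 => exact .comp ih1 ih2
  | prec _ _ ih1 ih2 => exact .prec ih1 ih2
  | rfind _ ih => exact .rfind ih

lemma funcRecIn_of_computable {A : Set ℕ} {h : ℕ → ℕ} (hh : Computable h) :
    FuncRecIn A h :=
  recursiveIn_of_partrec _ (Partrec.nat_iff.mp hh)

lemma FuncRecIn.comp' {A : Set ℕ} {g h : ℕ → ℕ} (hg : FuncRecIn A g) (hh : FuncRecIn A h) :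
    FuncRecIn A fun n => g (h n) := by
  have hcomp := RecursiveIn'.comp (O := chi A) (f := fun m => Part.some (g m))
    (g := fun n => Part.some (h n)) hg hh
  have e : (fun n => (Part.some (h n)) >>= fun m => Part.some (g m))
      = fun n => Part.some (g (h n)) := by funext n; simp
  rwa [e] at hcomp

lemma hphi_partrec : Partrec₂ phi :=
  (eval_part.comp ((Computable.ofNat Code).comp Computable.fst) Computable.snd).to₂

/-- search for an element of `W n` -/
noncomputable def psiW (n : ℕ) : Part ℕ :=
  Nat.rfindOpt fun m =>
    (evaln m.unpair.2 (Denumerable.ofNat Code n) m.unpair.1).map fun _ => m.unpair.1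

lemma psiW_partrec : Partrec fun p : ℕ => psiW p.unpair.1 := by
  have u1 : Primrec fun p : ℕ × ℕ => p.2.unpair.1 :=
    Primrec.fst.comp (Primrec.unpair.comp Primrec.snd)
  have u2 : Primrec fun p : ℕ × ℕ => p.2.unpair.2 :=
    Primrec.snd.comp (Primrec.unpair.comp Primrec.snd)
  have h1 : Primrec fun p : ℕ × ℕ =>
      evaln p.2.unpair.2 (Denumerable.ofNat Code p.1.unpair.1) p.2.unpair.1 :=
    primrec_evaln.comp ((u2.pair ((Primrec.ofNat Code).comp
      (Primrec.fst.comp (Primrec.unpair.comp Primrec.fst)))).pair u1)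
  have h2 : Primrec₂ fun (n m : ℕ) =>
      (evaln m.unpair.2 (Denumerable.ofNat Code n.unpair.1) m.unpair.1).map
        fun _ => m.unpair.1 :=
    Primrec.option_map h1 (u1.comp Primrec.fst).to₂
  exact Partrec.rfindOpt h2.to_comp

lemma psiW_mem {n v : ℕ} (h : v ∈ psiW n) : (phi n v).Dom := by
  obtain ⟨m, hm⟩ := Nat.rfindOpt_spec h
  simp only [Option.mem_def, Option.map_eq_some_iff] at hm
  obtain ⟨w, hw, rfl⟩ := hm
  exact Part.dom_iff_mem.2 ⟨w, evaln_sound hw⟩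

lemma psiW_dom {n x : ℕ} (h : (phi n x).Dom) : (psiW n).Dom := by
  obtain ⟨w, hw⟩ := Part.dom_iff_mem.1 h
  obtain ⟨k, hk⟩ := evaln_complete.1 hw
  refine Nat.rfindOpt_dom.2 ⟨Nat.pair x k, x, ?_⟩
  simp only [Nat.unpair_pair, Option.mem_def, Option.map_eq_some_iff]
  exact ⟨w, hk, by simp⟩

/-- a partial function whose sections have singleton domains -/
def singF : ℕ →. ℕ := fun p =>
  Nat.rfind fun _ => Part.some (decide (p.unpair.2 = p.unpair.1))

lemma singF_partrec : Partrec singF := by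
  apply Partrec.rfind
  exact (Computable₂.partrec₂ (Primrec.eq.comp
    (Primrec.snd.comp (Primrec.unpair.comp Primrec.fst))
    (Primrec.fst.comp (Primrec.unpair.comp Primrec.fst))).decide.to_comp.to₂)

lemma singF_dom (p : ℕ) : (singF p).Dom ↔ p.unpair.2 = p.unpair.1 := by
  constructor
  · intro h
    obtain ⟨n, hn, -⟩ := Nat.rfind_dom.1 h
    simpa using hn
  · intro h
    exact Nat.rfind_dom.2 ⟨0, by simpa using h, by intro m hm; simp⟩

end FpfDncAux

/-- A set computes an FPF function iff it computes a DNC function. -/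
theorem fpf_iff_dnc (A : Set ℕ) :
    (∃ f : ℕ → ℕ, FuncRecIn A f ∧ ∀ n, W (f n) ≠ W n) ↔
    (∃ g : ℕ → ℕ, FuncRecIn A g ∧ ∀ e, (g e : ℕ) ∉ phi e e) := by
  classical
  constructor
  · rintro ⟨f, hfA, hf⟩
    have hθ : Partrec
        (fun p : ℕ => (phi p.unpair.1 p.unpair.1).bind fun v => phi v p.unpair.2) := by
      have h1 : Partrec fun p : ℕ => phi p.unpair.1 p.unpair.1 :=
        hphi_partrec.comp (Computable.fst.comp Computable.unpair)
          (Computable.fst.comp Computable.unpair)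
      exact h1.bind
        ((hphi_partrec.comp Computable.snd
          ((Computable.snd.comp Computable.unpair).comp Computable.fst)).to₂)
    obtain ⟨cθ, hcθ⟩ := Nat.Partrec.Code.exists_code.1 (Partrec.nat_iff.1 hθ)
    set hmap : ℕ → ℕ := fun e => Encodable.encode (Nat.Partrec.Code.curry cθ e) with hhmap
    have hmapC : Computable hmap :=
      (Primrec.encode.comp (Nat.Partrec.Code.primrec₂_curry.comp
        (Primrec.const cθ) Primrec.id)).to_comp
    have key : ∀ e x, phi (hmap e) x = (phi e e).bind fun v => phi v x := by
      intro e x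
      show (Denumerable.ofNat Code _).eval x = _
      rw [hhmap]
      rw [Denumerable.ofNat_encode, Nat.Partrec.Code.eval_curry, hcθ]
      simp
    refine ⟨fun e => f (hmap e),
      FuncRecIn.comp' hfA (funcRecIn_of_computable hmapC), ?_⟩
    intro e hmem
    have hsome : phi e e = Part.some (f (hmap e)) := Part.eq_some_iff.2 hmem
    apply hf (hmap e)
    ext x
    simp [W, key, hsome]
  · rintro ⟨g, hgA, hg⟩
    obtain ⟨cψ, hcψ⟩ := Nat.Partrec.Code.exists_code.1 (Partrec.nat_iff.1 psiW_partrec)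
    obtain ⟨cσ, hcσ⟩ := Nat.Partrec.Code.exists_code.1 (Partrec.nat_iff.1 singF_partrec)
    set kmap : ℕ → ℕ := fun n => Encodable.encode (Nat.Partrec.Code.curry cψ n) with hkmap
    set cmap : ℕ → ℕ := fun m => Encodable.encode (Nat.Partrec.Code.curry cσ m) with hcmap
    have kC : Computable kmap :=
      (Primrec.encode.comp (Nat.Partrec.Code.primrec₂_curry.comp
        (Primrec.const cψ) Primrec.id)).to_comp
    have cC : Computable cmap :=
      (Primrec.encode.comp (Nat.Partrec.Code.primrec₂_curry.comp
        (Primrec.const cσ) Primrec.id)).to_comp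
    have keyk : ∀ n x, phi (kmap n) x = psiW n := by
      intro n x
      show (Denumerable.ofNat Code _).eval x = _
      rw [hkmap]
      rw [Denumerable.ofNat_encode, Nat.Partrec.Code.eval_curry, hcψ]
      simp
    have keyc : ∀ m x, (phi (cmap m) x).Dom ↔ x = m := by
      intro m x
      show ((Denumerable.ofNat Code _).eval x).Dom ↔ _
      rw [hcmap]
      rw [Denumerable.ofNat_encode, Nat.Partrec.Code.eval_curry, hcσ, singF_dom]
      simp
    refine ⟨fun n => cmap (g (kmap n)),
      FuncRecIn.comp' (funcRecIn_of_computable cC)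
        (FuncRecIn.comp' hgA (funcRecIn_of_computable kC)), ?_⟩
    intro n hWeq
    have hgW : g (kmap n) ∈ W n := by
      rw [← hWeq]
      exact (keyc _ _).2 rfl
    have hdom : (psiW n).Dom := psiW_dom hgW
    have hv : (psiW n).get hdom ∈ psiW n := Part.get_mem _
    have hvW : (psiW n).get hdom ∈ W n := psiW_mem hv
    have hveq : (psiW n).get hdom = g (kmap n) := by
      rw [← hWeq] at hvW
      exact (keyc _ _).1 hvW
    exact hg (kmap n) (by rw [keyk, ← hveq]; exact hv)
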